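/- Let q be a prime power with 5 | (q-1), let ω ∈ F_q be a primitive 5th root of unity, and let 0 ≤ u_1 < u_2 ≤ 4. The cyclic code C of length 5 over F_q generated by (x-ω^{u_1})(x-ω^{u_2}) is a [5,3] code with weight enumerator 1 + 10(q-1)z^3 + 5(q-1)(q-3)z^4 + (q-1)(q^2-4q+6)z^5; in particular C is MDS with minimum distance 3. -/

import Mathlib

open Polynomial Finset

/-- The cyclic code of length `n` over `F` generated by `g` in `F[x]/(xⁿ-1)`,
viewed as a set of coefficient vectors. -/
def cyclicCode (F : Type) [Field F] (n : ℕ) (g : F[X]) : Set (Fin n → F) :=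
  {c | Ideal.Quotient.mk (Ideal.span {(X : F[X]) ^ n - 1})
        (∑ i : Fin n, C (c i) * X ^ (i : ℕ)) ∈
      Ideal.span {Ideal.Quotient.mk (Ideal.span {(X : F[X]) ^ n - 1}) g}}

namespace Stmt9Aux

variable {F : Type} [Field F] [Fintype F] [DecidableEq F]

def Kf (a b : F) : Finset (Fin 5 → F) :=
  univ.filter (fun c => (∑ i : Fin 5, c i * a ^ (i : ℕ)) = 0 ∧
    (∑ i : Fin 5, c i * b ^ (i : ℕ)) = 0)

lemma mem_Kf {a b : F} {c : Fin 5 → F} :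
    c ∈ Kf a b ↔ (∑ i : Fin 5, c i * a ^ (i : ℕ)) = 0 ∧
      (∑ i : Fin 5, c i * b ^ (i : ℕ)) = 0 := by
  simp [Kf]

lemma sum_split (j k : Fin 5) (h : j ≠ k) (f : Fin 5 → F) :
    ∑ i, f i = f j + f k + ∑ i ∈ univ \ {j, k}, f i := by
  have huniv : (univ : Finset (Fin 5)) = insert j (insert k (univ \ {j, k})) := by
    ext i
    simp only [mem_univ, mem_insert, mem_sdiff, mem_singleton, true_iff, true_and]
    tauto
  conv_lhs => rw [huniv]
  rw [Finset.sum_insert (by simp [h]), Finset.sum_insert (by simp), add_assoc]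

lemma zero_of_two {a b : F} (hA : a ≠ 0)
    (hD : ∀ j k : Fin 5, j ≠ k → a ^ (j:ℕ) * b ^ (k:ℕ) ≠ a ^ (k:ℕ) * b ^ (j:ℕ))
    {c : Fin 5 → F} (hc : c ∈ Kf a b) (j k : Fin 5) (hjk : j ≠ k)
    (hz : ∀ i, i ≠ j → i ≠ k → c i = 0) : c = 0 := by
  obtain ⟨h1, h2⟩ := mem_Kf.mp hc
  have hrest : ∀ x : F, ∑ i ∈ univ \ {j, k}, c i * x ^ (i:ℕ) = 0 := by
    intro x
    refine Finset.sum_eq_zero fun i hi => ?_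
    simp only [mem_sdiff, mem_insert, mem_singleton, not_or] at hi
    rw [hz i hi.2.1 hi.2.2, zero_mul]
  rw [sum_split j k hjk, hrest, add_zero] at h1 h2
  have hk : c k * (a ^ (k:ℕ) * b ^ (j:ℕ) - a ^ (j:ℕ) * b ^ (k:ℕ)) = 0 := by
    linear_combination b ^ (j:ℕ) * h1 - a ^ (j:ℕ) * h2
  have hkk : c k = 0 := by
    rcases mul_eq_zero.mp hk with h | h
    · exact h
    · exact absurd (sub_eq_zero.mp h) (hD k j hjk.symm)
  have hjj : c j = 0 := by
    rw [hkk, zero_mul, add_zero] at h1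
    exact (mul_eq_zero.mp h1).resolve_right (pow_ne_zero _ hA)
  funext i
  simp only [Pi.zero_apply]
  by_cases hij : i = j
  · rw [hij]; exact hjj
  by_cases hik : i = k
  · rw [hik]; exact hkk
  · exact hz i hij hik

lemma complete {a b : F}
    (hD : ∀ j k : Fin 5, j ≠ k → a ^ (j:ℕ) * b ^ (k:ℕ) ≠ a ^ (k:ℕ) * b ^ (j:ℕ))
    (j k : Fin 5) (hjk : j ≠ k) (v : Fin 5 → F) :
    ∃ c ∈ Kf a b, ∀ i, i ≠ j → i ≠ k → c i = v i := by
  set A := ∑ i ∈ univ \ {j, k}, v i * a ^ (i:ℕ) with hA'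
  set B := ∑ i ∈ univ \ {j, k}, v i * b ^ (i:ℕ) with hB'
  set D := a ^ (j:ℕ) * b ^ (k:ℕ) - a ^ (k:ℕ) * b ^ (j:ℕ) with hDdef
  have hDne : D ≠ 0 := sub_ne_zero.mpr (hD j k hjk)
  refine ⟨fun i => if i = j then (-A * b ^ (k:ℕ) + B * a ^ (k:ℕ)) / D
      else if i = k then (A * b ^ (j:ℕ) - B * a ^ (j:ℕ)) / D else v i, ?_, ?_⟩
  · rw [mem_Kf]
    constructor
    · rw [sum_split j k hjk]
      have hr : ∑ i ∈ univ \ {j, k},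
          (if i = j then (-A * b ^ (k:ℕ) + B * a ^ (k:ℕ)) / D
            else if i = k then (A * b ^ (j:ℕ) - B * a ^ (j:ℕ)) / D else v i) * a ^ (i:ℕ) = A := by
        rw [hA']
        refine Finset.sum_congr rfl fun i hi => ?_
        simp only [mem_sdiff, mem_insert, mem_singleton, not_or] at hi
        rw [if_neg hi.2.1, if_neg hi.2.2]
      rw [hr]
      simp only [if_pos rfl, if_neg hjk.symm, if_neg hjk, if_true]
      field_simp
      ring
    · rw [sum_split j k hjk]
      have hr : ∑ i ∈ univ \ {j, k},
          (if i = j then (-A * b ^ (k:ℕ) + B * a ^ (k:ℕ)) / D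
            else if i = k then (A * b ^ (j:ℕ) - B * a ^ (j:ℕ)) / D else v i) * b ^ (i:ℕ) = B := by
        rw [hB']
        refine Finset.sum_congr rfl fun i hi => ?_
        simp only [mem_sdiff, mem_insert, mem_singleton, not_or] at hi
        rw [if_neg hi.2.1, if_neg hi.2.2]
      rw [hr]
      simp only [if_pos rfl, if_neg hjk.symm, if_neg hjk, if_true]
      field_simp
      ring
  · intro i hij hik
    simp only [if_neg hij, if_neg hik]

lemma small_wt {a b : F} (hA : a ≠ 0)
    (hD : ∀ j k : Fin 5, j ≠ k → a ^ (j:ℕ) * b ^ (k:ℕ) ≠ a ^ (k:ℕ) * b ^ (j:ℕ))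
    {c : Fin 5 → F} (hc : c ∈ Kf a b) (hw : hammingNorm c ≤ 2) : c = 0 := by
  obtain ⟨u, hsub, -, hu⟩ := Finset.exists_subsuperset_card_eq
    (Finset.subset_univ ({i | c i ≠ 0} : Finset (Fin 5))) hw
    (by simp [Finset.card_univ])
  obtain ⟨x, y, hxy, rfl⟩ := Finset.card_eq_two.mp hu
  refine zero_of_two hA hD hc x y hxy fun i hix hiy => ?_
  by_contra hne
  have : i ∈ ({x, y} : Finset (Fin 5)) := hsub (by simp [hne])
  simp only [mem_insert, mem_singleton] at this
  tauto


lemma card_two_zeros {a b : F} (hA : a ≠ 0)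
    (hD : ∀ j k : Fin 5, j ≠ k → a ^ (j:ℕ) * b ^ (k:ℕ) ≠ a ^ (k:ℕ) * b ^ (j:ℕ))
    (s t r₁ r₂ r₃ : Fin 5)
    (hcov : ∀ i : Fin 5, i = s ∨ i = t ∨ i = r₁ ∨ i = r₂ ∨ i = r₃)
    (hnd : s ≠ t ∧ s ≠ r₁ ∧ s ≠ r₂ ∧ s ≠ r₃ ∧ t ≠ r₁ ∧ t ≠ r₂ ∧ t ≠ r₃ ∧
      r₁ ≠ r₂ ∧ r₁ ≠ r₃ ∧ r₂ ≠ r₃) :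
    ((Kf a b).filter fun c => c s = 0 ∧ c t = 0).card = Fintype.card F := by
  obtain ⟨h0, h1, h2, h3, h4, h5, h6, h7, h8, h9⟩ := hnd
  rw [← Finset.card_univ (α := F)]
  refine Finset.card_bij (fun c _ => c r₁) (fun _ _ => mem_univ _) ?_ ?_
  · intro c₁ hc₁ c₂ hc₂ hval
    simp only [mem_filter] at hc₁ hc₂
    obtain ⟨e1, e2⟩ := mem_Kf.mp hc₁.1
    obtain ⟨f1, f2⟩ := mem_Kf.mp hc₂.1
    have hdmem : c₁ - c₂ ∈ Kf a b := by
      rw [mem_Kf]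
      constructor <;> simp only [Pi.sub_apply, sub_mul, Finset.sum_sub_distrib]
      · rw [e1, f1, sub_zero]
      · rw [e2, f2, sub_zero]
    have hzero : c₁ - c₂ = 0 := by
      refine zero_of_two hA hD hdmem r₂ r₃ h9 fun i hi2 hi3 => ?_
      rcases hcov i with h | h | h | h | h
      · subst h; simp [hc₁.2.1, hc₂.2.1]
      · subst h; simp [hc₁.2.2, hc₂.2.2]
      · subst h; simp [hval]
      · exact absurd h hi2
      · exact absurd h hi3
    exact sub_eq_zero.mp hzero
  · intro x _
    obtain ⟨c, hcK, hcv⟩ := complete hD r₂ r₃ h9 (fun i => if i = r₁ then x else 0)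
    refine ⟨c, Finset.mem_filter.mpr ⟨hcK, ?_, ?_⟩, ?_⟩
    · rw [hcv s h2 h3, if_neg h1]
    · rw [hcv t h5 h6, if_neg h4]
    · show c r₁ = x
      rw [hcv r₁ h7 h8, if_pos rfl]

lemma card_one_zero {a b : F} (hA : a ≠ 0)
    (hD : ∀ j k : Fin 5, j ≠ k → a ^ (j:ℕ) * b ^ (k:ℕ) ≠ a ^ (k:ℕ) * b ^ (j:ℕ))
    (s r₁ r₂ r₃ r₄ : Fin 5)
    (hcov : ∀ i : Fin 5, i = s ∨ i = r₁ ∨ i = r₂ ∨ i = r₃ ∨ i = r₄)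
    (hnd : s ≠ r₁ ∧ s ≠ r₂ ∧ s ≠ r₃ ∧ s ≠ r₄ ∧ r₁ ≠ r₂ ∧ r₁ ≠ r₃ ∧ r₁ ≠ r₄ ∧
      r₂ ≠ r₃ ∧ r₂ ≠ r₄ ∧ r₃ ≠ r₄) :
    ((Kf a b).filter fun c => c s = 0).card = Fintype.card F ^ 2 := by
  obtain ⟨h1, h2, h3, h4, h5, h6, h7, h8, h9, h10⟩ := hnd
  have : Fintype.card F ^ 2 = Finset.card (univ : Finset (F × F)) := by
    simp [Finset.card_univ, Fintype.card_prod, sq]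
  rw [this]
  refine Finset.card_bij (fun c _ => (c r₁, c r₂)) (fun _ _ => mem_univ _) ?_ ?_
  · intro c₁ hc₁ c₂ hc₂ hval
    simp only [mem_filter] at hc₁ hc₂
    have hv1 : c₁ r₁ = c₂ r₁ := congrArg Prod.fst hval
    have hv2 : c₁ r₂ = c₂ r₂ := congrArg Prod.snd hval
    obtain ⟨e1, e2⟩ := mem_Kf.mp hc₁.1
    obtain ⟨f1, f2⟩ := mem_Kf.mp hc₂.1
    have hdmem : c₁ - c₂ ∈ Kf a b := by
      rw [mem_Kf]
      constructor <;> simp only [Pi.sub_apply, sub_mul, Finset.sum_sub_distrib]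
      · rw [e1, f1, sub_zero]
      · rw [e2, f2, sub_zero]
    have hzero : c₁ - c₂ = 0 := by
      refine zero_of_two hA hD hdmem r₃ r₄ h10 fun i hi3 hi4 => ?_
      rcases hcov i with h | h | h | h | h
      · subst h; simp [hc₁.2, hc₂.2]
      · subst h; simp [hv1]
      · subst h; simp [hv2]
      · exact absurd h hi3
      · exact absurd h hi4
    exact sub_eq_zero.mp hzero
  · intro x _
    obtain ⟨c, hcK, hcv⟩ := complete hD r₃ r₄ h10
      (fun i => if i = r₁ then x.1 else if i = r₂ then x.2 else 0)
    refine ⟨c, Finset.mem_filter.mpr ⟨hcK, ?_⟩, ?_⟩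
    · rw [hcv s h3 h4, if_neg h1, if_neg h2]
    · show (c r₁, c r₂) = x
      rw [hcv r₁ h6 h7, if_pos rfl, hcv r₂ h8 h9, if_neg (Ne.symm h5), if_pos rfl]

lemma card_Kf {a b : F} (hA : a ≠ 0)
    (hD : ∀ j k : Fin 5, j ≠ k → a ^ (j:ℕ) * b ^ (k:ℕ) ≠ a ^ (k:ℕ) * b ^ (j:ℕ)) :
    (Kf a b).card = Fintype.card F ^ 3 := by
  have : Fintype.card F ^ 3 = Finset.card (univ : Finset (F × F × F)) := by
    simp [Finset.card_univ, Fintype.card_prod]; ring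
  rw [this]
  refine Finset.card_bij (fun c _ => (c 0, c 1, c 2)) (fun _ _ => mem_univ _) ?_ ?_
  · intro c₁ hc₁ c₂ hc₂ hval
    have hv0 : c₁ 0 = c₂ 0 := congrArg Prod.fst hval
    have hv1 : c₁ 1 = c₂ 1 := congrArg (fun z => z.2.1) hval
    have hv2 : c₁ 2 = c₂ 2 := congrArg (fun z => z.2.2) hval
    obtain ⟨e1, e2⟩ := mem_Kf.mp hc₁
    obtain ⟨f1, f2⟩ := mem_Kf.mp hc₂
    have hdmem : c₁ - c₂ ∈ Kf a b := by
      rw [mem_Kf]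
      constructor <;> simp only [Pi.sub_apply, sub_mul, Finset.sum_sub_distrib]
      · rw [e1, f1, sub_zero]
      · rw [e2, f2, sub_zero]
    have hzero : c₁ - c₂ = 0 := by
      refine zero_of_two hA hD hdmem 3 4 (by decide) fun i hi3 hi4 => ?_
      have : i = 0 ∨ i = 1 ∨ i = 2 ∨ i = 3 ∨ i = 4 := by omega
      rcases this with h | h | h | h | h
      · subst h; simp [hv0]
      · subst h; simp [hv1]
      · subst h; simp [hv2]
      · exact absurd h hi3
      · exact absurd h hi4
    exact sub_eq_zero.mp hzero
  · intro x _
    obtain ⟨c, hcK, hcv⟩ := complete hD 3 4 (by decide)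
      (fun i => if i = 0 then x.1 else if i = 1 then x.2.1 else if i = 2 then x.2.2 else 0)
    refine ⟨c, hcK, ?_⟩
    show (c 0, c 1, c 2) = x
    rw [hcv 0 (by decide) (by decide), hcv 1 (by decide) (by decide),
      hcv 2 (by decide) (by decide)]
    simp


lemma zero_mem_Kf (a b : F) : (0 : Fin 5 → F) ∈ Kf a b := by
  rw [mem_Kf]; simp

lemma norm_le_of_two_zeros {c : Fin 5 → F} {s t : Fin 5} (hst : s ≠ t)
    (hs : c s = 0) (ht : c t = 0) : hammingNorm c ≤ 3 := by
  have hsub : ({i | c i ≠ 0} : Finset (Fin 5)) ⊆ univ \ {s, t} := by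
    intro i hi
    simp only [mem_filter, mem_univ, true_and] at hi
    simp only [mem_sdiff, mem_univ, mem_insert, mem_singleton, true_and, not_or]
    constructor
    · rintro rfl; exact hi hs
    · rintro rfl; exact hi ht
  calc hammingNorm c ≤ (univ \ {s, t} : Finset (Fin 5)).card := Finset.card_le_card hsub
    _ = 3 := by
      rw [Finset.card_sdiff_of_subset (by simp), Finset.card_pair hst]
      simp

lemma card_W3pair {a b : F} (hA : a ≠ 0)
    (hD : ∀ j k : Fin 5, j ≠ k → a ^ (j:ℕ) * b ^ (k:ℕ) ≠ a ^ (k:ℕ) * b ^ (j:ℕ))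
    (s t r₁ r₂ r₃ : Fin 5)
    (hcov : ∀ i : Fin 5, i = s ∨ i = t ∨ i = r₁ ∨ i = r₂ ∨ i = r₃)
    (hnd : s ≠ t ∧ s ≠ r₁ ∧ s ≠ r₂ ∧ s ≠ r₃ ∧ t ≠ r₁ ∧ t ≠ r₂ ∧ t ≠ r₃ ∧
      r₁ ≠ r₂ ∧ r₁ ≠ r₃ ∧ r₂ ≠ r₃) :
    ((Kf a b).filter fun c => hammingNorm c = 3 ∧ c s = 0 ∧ c t = 0).card
      = Fintype.card F - 1 := by
  have key : ((Kf a b).filter fun c => hammingNorm c = 3 ∧ c s = 0 ∧ c t = 0)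
      = ((Kf a b).filter fun c => c s = 0 ∧ c t = 0).erase 0 := by
    ext c
    simp only [mem_filter, mem_erase]
    constructor
    · rintro ⟨hK, h3, hs, ht⟩
      refine ⟨fun h0 => ?_, hK, hs, ht⟩
      rw [h0, hammingNorm_zero] at h3
      exact absurd h3 (by norm_num)
    · rintro ⟨h0, hK, hs, ht⟩
      refine ⟨hK, ?_, hs, ht⟩
      have hle : hammingNorm c ≤ 3 := norm_le_of_two_zeros hnd.1 hs ht
      have hge : ¬ hammingNorm c ≤ 2 := fun h => h0 (small_wt hA hD hK h)
      omega
  rw [key, Finset.card_erase_of_mem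
    (Finset.mem_filter.mpr ⟨zero_mem_Kf a b, rfl, rfl⟩),
    card_two_zeros hA hD s t r₁ r₂ r₃ hcov hnd]

def pairs : Finset (Fin 5 × Fin 5) :=
  {(0,1), (0,2), (0,3), (0,4), (1,2), (1,3), (1,4), (2,3), (2,4), (3,4)}

lemma card_W3 {a b : F} (hA : a ≠ 0)
    (hD : ∀ j k : Fin 5, j ≠ k → a ^ (j:ℕ) * b ^ (k:ℕ) ≠ a ^ (k:ℕ) * b ^ (j:ℕ)) :
    ((Kf a b).filter fun c => hammingNorm c = 3).card = 10 * (Fintype.card F - 1) := by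
  have hun : (Kf a b).filter (fun c => hammingNorm c = 3)
      = pairs.biUnion (fun p => (Kf a b).filter
          fun c => hammingNorm c = 3 ∧ c p.1 = 0 ∧ c p.2 = 0) := by
    ext c
    simp only [mem_biUnion, mem_filter]
    constructor
    · rintro ⟨hK, h3⟩
      have hz : ({i | c i = 0} : Finset (Fin 5)).card = 2 := by
        have hc := Finset.card_filter_add_card_filter_not
          (s := (univ : Finset (Fin 5))) (p := fun i => c i = 0)
        have h3' : ({i | ¬ c i = 0} : Finset (Fin 5)).card = 3 := h3
        have hu : (univ : Finset (Fin 5)).card = 5 := by simp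
        omega
      obtain ⟨x, y, hxy, hset⟩ := Finset.card_eq_two.mp hz
      have hx : c x = 0 := by
        have : x ∈ ({i | c i = 0} : Finset (Fin 5)) := by rw [hset]; simp
        simpa using this
      have hy : c y = 0 := by
        have : y ∈ ({i | c i = 0} : Finset (Fin 5)) := by rw [hset]; simp
        simpa using this
      have hmem : ∀ x y : Fin 5, x ≠ y → (x, y) ∈ pairs ∨ (y, x) ∈ pairs := by decide
      rcases hmem x y hxy with h | h
      · exact ⟨(x, y), h, hK, h3, hx, hy⟩
      · exact ⟨(y, x), h, hK, h3, hy, hx⟩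
    · rintro ⟨p, _, hK, h3, _, _⟩
      exact ⟨hK, h3⟩
  have hdisj : ∀ p ∈ pairs, ∀ r ∈ pairs, p ≠ r →
      Disjoint ((Kf a b).filter fun c => hammingNorm c = 3 ∧ c p.1 = 0 ∧ c p.2 = 0)
        ((Kf a b).filter fun c => hammingNorm c = 3 ∧ c r.1 = 0 ∧ c r.2 = 0) := by
    intro p hp r hr hpr
    rw [Finset.disjoint_left]
    rintro c hc1 hc2
    simp only [mem_filter] at hc1 hc2
    obtain ⟨-, h3, hp1, hp2⟩ := hc1
    obtain ⟨-, -, hr1, hr2⟩ := hc2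
    have hkey : ∀ p ∈ pairs, ∀ r ∈ pairs, p ≠ r →
        ((univ : Finset (Fin 5)) \ {p.1, p.2, r.1, r.2}).card ≤ 2 := by decide
    have hsub : ({i | c i ≠ 0} : Finset (Fin 5)) ⊆ univ \ {p.1, p.2, r.1, r.2} := by
      intro i hi
      simp only [mem_filter, mem_univ, true_and] at hi
      simp only [mem_sdiff, mem_univ, mem_insert, mem_singleton, true_and, not_or]
      refine ⟨?_, ?_, ?_, ?_⟩ <;> rintro rfl <;> [exact hi hp1; exact hi hp2;
        exact hi hr1; exact hi hr2]
    have : hammingNorm c ≤ 2 :=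
      le_trans (Finset.card_le_card hsub) (hkey p hp r hr hpr)
    omega
  rw [hun, Finset.card_biUnion hdisj]
  have heach : ∀ p ∈ pairs, ((Kf a b).filter
      fun c => hammingNorm c = 3 ∧ c p.1 = 0 ∧ c p.2 = 0).card = Fintype.card F - 1 := by
    intro p hp
    fin_cases hp
    · exact card_W3pair hA hD 0 1 2 3 4 (by decide) (by decide)
    · exact card_W3pair hA hD 0 2 1 3 4 (by decide) (by decide)
    · exact card_W3pair hA hD 0 3 1 2 4 (by decide) (by decide)
    · exact card_W3pair hA hD 0 4 1 2 3 (by decide) (by decide)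
    · exact card_W3pair hA hD 1 2 0 3 4 (by decide) (by decide)
    · exact card_W3pair hA hD 1 3 0 2 4 (by decide) (by decide)
    · exact card_W3pair hA hD 1 4 0 2 3 (by decide) (by decide)
    · exact card_W3pair hA hD 2 3 0 1 4 (by decide) (by decide)
    · exact card_W3pair hA hD 2 4 0 1 3 (by decide) (by decide)
    · exact card_W3pair hA hD 3 4 0 1 2 (by decide) (by decide)
  rw [Finset.sum_congr rfl heach, Finset.sum_const]
  have : pairs.card = 10 := by decide
  rw [this, smul_eq_mul]


lemma norm_le5 (c : Fin 5 → F) : hammingNorm c ≤ 5 := by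
  simpa using hammingNorm_le_card_fintype (x := c)

lemma double_count (a b : F) :
    ∑ s : Fin 5, ((Kf a b).filter fun c => c s = 0).card
      = ∑ c ∈ Kf a b, (5 - hammingNorm c) := by
  have h1 : ∀ s : Fin 5, ((Kf a b).filter fun c => c s = 0).card
      = ∑ c ∈ Kf a b, if c s = 0 then 1 else 0 := fun s => Finset.card_filter _ _
  simp only [h1]
  rw [Finset.sum_comm]
  refine Finset.sum_congr rfl fun c _ => ?_
  have h2 : ∑ s : Fin 5, (if c s = 0 then 1 else 0)
      = ({s | c s = 0} : Finset (Fin 5)).card := (Finset.card_filter _ _).symm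
  rw [h2]
  have hc2 := Finset.card_filter_add_card_filter_not
    (s := (univ : Finset (Fin 5))) (p := fun i => c i = 0)
  have hn : ({i | ¬ c i = 0} : Finset (Fin 5)).card = hammingNorm c := rfl
  have hu : (univ : Finset (Fin 5)).card = 5 := by simp
  omega

lemma card_fiber_sum (a b : F) :
    (Kf a b).card
      = ∑ w ∈ Finset.range 6, ((Kf a b).filter fun c => hammingNorm c = w).card :=
  Finset.card_eq_sum_card_fiberwise fun c _ =>
    Finset.mem_range.mpr (by have := norm_le5 c; omega)

lemma sum_fiber_weighted (a b : F) :
    ∑ c ∈ Kf a b, (5 - hammingNorm c)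
      = ∑ w ∈ Finset.range 6,
          (5 - w) * ((Kf a b).filter fun c => hammingNorm c = w).card := by
  rw [← Finset.sum_fiberwise_of_maps_to (g := hammingNorm) (t := Finset.range 6)
    (fun c _ => Finset.mem_range.mpr (by have := norm_le5 c; omega))
    (fun c => 5 - hammingNorm c)]
  refine Finset.sum_congr rfl fun w _ => ?_
  rw [Finset.sum_congr rfl (fun c hc => by rw [(Finset.mem_filter.mp hc).2]),
    Finset.sum_const, smul_eq_mul, mul_comm]

lemma card_W0 (a b : F) : ((Kf a b).filter fun c => hammingNorm c = 0).card = 1 := by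
  have h : (Kf a b).filter (fun c => hammingNorm c = 0) = {0} := by
    ext c
    simp only [mem_filter, mem_singleton, hammingNorm_eq_zero]
    exact ⟨fun h => h.2, by rintro rfl; exact ⟨zero_mem_Kf a b, rfl⟩⟩
  rw [h, Finset.card_singleton]

lemma card_Wsmall {a b : F} (hA : a ≠ 0)
    (hD : ∀ j k : Fin 5, j ≠ k → a ^ (j:ℕ) * b ^ (k:ℕ) ≠ a ^ (k:ℕ) * b ^ (j:ℕ))
    {w : ℕ} (h0 : 0 < w) (hw : w ≤ 2) :
    ((Kf a b).filter fun c => hammingNorm c = w).card = 0 := by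
  rw [Finset.card_eq_zero, Finset.eq_empty_iff_forall_notMem]
  intro c hc
  obtain ⟨hK, hn⟩ := Finset.mem_filter.mp hc
  have h0' := small_wt hA hD hK (by omega)
  rw [h0', hammingNorm_zero] at hn
  omega

lemma sum_one_zero {a b : F} (hA : a ≠ 0)
    (hD : ∀ j k : Fin 5, j ≠ k → a ^ (j:ℕ) * b ^ (k:ℕ) ≠ a ^ (k:ℕ) * b ^ (j:ℕ)) :
    ∑ s : Fin 5, ((Kf a b).filter fun c => c s = 0).card = 5 * Fintype.card F ^ 2 := by
  rw [Fin.sum_univ_five]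
  rw [card_one_zero hA hD 0 1 2 3 4 (by decide) (by decide),
    card_one_zero hA hD 1 0 2 3 4 (by decide) (by decide),
    card_one_zero hA hD 2 0 1 3 4 (by decide) (by decide),
    card_one_zero hA hD 3 0 1 2 4 (by decide) (by decide),
    card_one_zero hA hD 4 0 1 2 3 (by decide) (by decide)]
  ring


lemma card_W45 {a b : F} (hA : a ≠ 0)
    (hD : ∀ j k : Fin 5, j ≠ k → a ^ (j:ℕ) * b ^ (k:ℕ) ≠ a ^ (k:ℕ) * b ^ (j:ℕ))
    (hq : 2 ≤ Fintype.card F) :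
    (((Kf a b).filter fun c => hammingNorm c = 4).card : ℤ)
        = 5 * ((Fintype.card F : ℤ) - 1) * ((Fintype.card F : ℤ) - 3) ∧
      (((Kf a b).filter fun c => hammingNorm c = 5).card : ℤ)
        = ((Fintype.card F : ℤ) - 1)
            * ((Fintype.card F : ℤ) ^ 2 - 4 * (Fintype.card F : ℤ) + 6) := by
  have E2 := card_fiber_sum a b
  have E1 := (double_count a b).trans (sum_fiber_weighted a b)
  rw [sum_one_zero hA hD] at E1
  rw [card_Kf hA hD] at E2
  simp only [Finset.sum_range_succ, Finset.sum_range_zero] at E1 E2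
  rw [card_W0, card_Wsmall hA hD one_pos (by norm_num),
    card_Wsmall hA hD two_pos le_rfl, card_W3 hA hD] at E1 E2
  have hq1 : 1 ≤ Fintype.card F := by omega
  have E1' : (5 : ℤ) * (Fintype.card F : ℤ) ^ 2
      = 5 + 2 * (10 * ((Fintype.card F : ℤ) - 1))
        + (((Kf a b).filter fun c => hammingNorm c = 4).card : ℤ) := by
    have := congrArg (Nat.cast : ℕ → ℤ) E1
    push_cast [Nat.cast_sub hq1] at this
    linarith
  have E2' : ((Fintype.card F : ℤ)) ^ 3
      = 1 + 10 * ((Fintype.card F : ℤ) - 1)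
        + (((Kf a b).filter fun c => hammingNorm c = 4).card : ℤ)
        + (((Kf a b).filter fun c => hammingNorm c = 5).card : ℤ) := by
    have := congrArg (Nat.cast : ℕ → ℤ) E2
    push_cast [Nat.cast_sub hq1] at this
    linarith
  constructor
  · linear_combination -E1'
  · linear_combination E1' - E2'

lemma code_eq {a b : F} (ha5 : a ^ 5 = 1) (hb5 : b ^ 5 = 1) (hab : a ≠ b) :
    cyclicCode F 5 ((X - C a) * (X - C b)) = ↑(Kf a b) := by
  ext c
  simp only [cyclicCode, Set.mem_setOf_eq, Finset.mem_coe, mem_Kf]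
  have heval : ∀ x : F, eval x (∑ i : Fin 5, C (c i) * X ^ (i:ℕ))
      = ∑ i : Fin 5, c i * x ^ (i:ℕ) := by
    intro x; simp [eval_finset_sum]
  constructor
  · intro h
    rw [Ideal.mem_span_singleton] at h
    obtain ⟨h', hh⟩ := h
    obtain ⟨hp, rfl⟩ := Ideal.Quotient.mk_surjective h'
    rw [← map_mul, Ideal.Quotient.eq, Ideal.mem_span_singleton] at hh
    obtain ⟨k, hk⟩ := hh
    have hkey : (∑ i : Fin 5, C (c i) * X ^ (i:ℕ))
        = (X - C a) * (X - C b) * hp + ((X : F[X]) ^ 5 - 1) * k := by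
      linear_combination hk
    constructor
    · have h' := congrArg (eval a) hkey
      rw [heval a] at h'
      simpa [ha5] using h'
    · have h' := congrArg (eval b) hkey
      rw [heval b] at h'
      simpa [hb5] using h'
  · rintro ⟨h1, h2⟩
    have hra : IsRoot (∑ i : Fin 5, C (c i) * X ^ (i:ℕ)) a := by
      rw [IsRoot.def, heval a]; exact h1
    obtain ⟨r, hr⟩ := (dvd_iff_isRoot).mpr hra
    have hrb : IsRoot r b := by
      have h2' : eval b (∑ i : Fin 5, C (c i) * X ^ (i:ℕ)) = 0 := by
        rw [heval b]; exact h2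
      rw [hr] at h2'
      simp only [eval_mul, eval_sub, eval_X, eval_C] at h2'
      rcases mul_eq_zero.mp h2' with h | h
      · exact absurd (sub_eq_zero.mp h).symm hab
      · exact h
    obtain ⟨r', hr'⟩ := (dvd_iff_isRoot).mpr hrb
    rw [Ideal.mem_span_singleton]
    refine ⟨Ideal.Quotient.mk _ r', ?_⟩
    rw [← map_mul]
    congr 1
    rw [hr, hr', mul_assoc]

end Stmt9Aux

theorem stmt_9 (p m q : ℕ) (hp : p.Prime) (hm : 0 < m) (hq : q = p ^ m)
    (F : Type) [Field F] [Fintype F] [DecidableEq F] (hF : Fintype.card F = q)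
    (h5 : 5 ∣ q - 1) (ω : F) (hω : IsPrimitiveRoot ω 5)
    (u₁ u₂ : ℕ) (h12 : u₁ < u₂) (h2 : u₂ ≤ 4)
    (Ccode : Set (Fin 5 → F))
    (hC : Ccode = cyclicCode F 5 ((X - C (ω ^ u₁)) * (X - C (ω ^ u₂)))) :
    Module.finrank F (Submodule.span F Ccode) = 3 ∧
      (Set.ncard {c ∈ Ccode | hammingNorm c = 0} : ℤ) = 1 ∧
      (∀ i, 0 < i → i < 3 → (Set.ncard {c ∈ Ccode | hammingNorm c = i} : ℤ) = 0) ∧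
      (Set.ncard {c ∈ Ccode | hammingNorm c = 3} : ℤ) = 10 * ((q : ℤ) - 1) ∧
      (Set.ncard {c ∈ Ccode | hammingNorm c = 4} : ℤ) = 5 * ((q : ℤ) - 1) * ((q : ℤ) - 3) ∧
      (Set.ncard {c ∈ Ccode | hammingNorm c = 5} : ℤ) =
        ((q : ℤ) - 1) * ((q : ℤ) ^ 2 - 4 * q + 6) ∧
      sInf {w | ∃ c ∈ Ccode, c ≠ 0 ∧ hammingNorm c = w} = 3 := by
  classical
  have hq2 : 2 ≤ q := by
    subst hq
    calc 2 ≤ p := hp.two_le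
      _ ≤ p ^ m := Nat.le_self_pow (by omega) p
  have hq6 : 6 ≤ q := by omega
  have hω0 : ω ≠ 0 := by
    intro h
    have h1 := hω.pow_eq_one
    rw [h, zero_pow (by norm_num)] at h1
    exact zero_ne_one h1
  set a := ω ^ u₁ with ha
  set b := ω ^ u₂ with hb
  have hA : a ≠ 0 := pow_ne_zero _ hω0
  have hB : b ≠ 0 := pow_ne_zero _ hω0
  have ha5 : a ^ 5 = 1 := by
    rw [ha, ← pow_mul, mul_comm, pow_mul, hω.pow_eq_one, one_pow]
  have hb5 : b ^ 5 = 1 := by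
    rw [hb, ← pow_mul, mul_comm, pow_mul, hω.pow_eq_one, one_pow]
  have hab : a ≠ b := by
    intro h
    have := hω.pow_inj (by omega) (by omega) h
    omega
  have key : ∀ j k : ℕ, j < k → k < 5 → ω ^ (u₁ * j + u₂ * k) ≠ ω ^ (u₁ * k + u₂ * j) := by
    intro j k hjk hk5 heq
    obtain ⟨d, hd⟩ : ∃ d, u₂ = u₁ + d + 1 := ⟨u₂ - u₁ - 1, by omega⟩
    obtain ⟨e, he⟩ : ∃ e, k = j + e + 1 := ⟨k - j - 1, by omega⟩
    have hexp : u₁ * j + u₂ * k = (u₁ * k + u₂ * j) + (d + 1) * (e + 1) := by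
      subst hd; subst he; ring
    rw [hexp, pow_add] at heq
    have h1 : ω ^ ((d + 1) * (e + 1)) = 1 :=
      mul_left_cancel₀ (pow_ne_zero _ hω0) (heq.trans (mul_one _).symm)
    have h5d : 5 ∣ (d + 1) * (e + 1) := (hω.pow_eq_one_iff_dvd _).mp h1
    have := (Nat.Prime.dvd_mul (by norm_num)).mp h5d
    omega
  have hD : ∀ j k : Fin 5, j ≠ k → a ^ (j:ℕ) * b ^ (k:ℕ) ≠ a ^ (k:ℕ) * b ^ (j:ℕ) := by
    intro j k hjk
    have e1 : a ^ (j:ℕ) * b ^ (k:ℕ) = ω ^ (u₁ * (j:ℕ) + u₂ * (k:ℕ)) := by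
      rw [ha, hb, ← pow_mul, ← pow_mul, ← pow_add]
    have e2 : a ^ (k:ℕ) * b ^ (j:ℕ) = ω ^ (u₁ * (k:ℕ) + u₂ * (j:ℕ)) := by
      rw [ha, hb, ← pow_mul, ← pow_mul, ← pow_add]
    rw [e1, e2]
    have hvne : (j:ℕ) ≠ (k:ℕ) := fun h => hjk (Fin.ext h)
    rcases lt_or_gt_of_ne hvne with h | h
    · exact key (j:ℕ) (k:ℕ) h k.isLt
    · exact (key (k:ℕ) (j:ℕ) h j.isLt).symm
  have hcode : Ccode = ↑(Stmt9Aux.Kf a b) := by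
    rw [hC, Stmt9Aux.code_eq ha5 hb5 hab]
  -- the submodule
  let Ksub : Submodule F (Fin 5 → F) :=
    { carrier := ↑(Stmt9Aux.Kf a b)
      add_mem' := by
        intro x y hx hy
        simp only [Finset.mem_coe, Stmt9Aux.mem_Kf, Pi.add_apply, add_mul,
          Finset.sum_add_distrib] at *
        exact ⟨by rw [hx.1, hy.1, add_zero], by rw [hx.2, hy.2, add_zero]⟩
      zero_mem' := Finset.mem_coe.mpr (Stmt9Aux.zero_mem_Kf a b)
      smul_mem' := by
        intro r x hx
        simp only [Finset.mem_coe, Stmt9Aux.mem_Kf, Pi.smul_apply, smul_eq_mul, mul_assoc,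
          ← Finset.mul_sum] at *
        exact ⟨by rw [hx.1, mul_zero], by rw [hx.2, mul_zero]⟩ }
  have hKsubcoe : (Ksub : Set (Fin 5 → F)) = ↑(Stmt9Aux.Kf a b) := rfl
  have hspan : Submodule.span F Ccode = Ksub := by
    rw [hcode, ← hKsubcoe]
    exact Submodule.span_eq Ksub
  letI : Fintype Ksub := Fintype.ofFinset (Stmt9Aux.Kf a b) (fun c => Iff.rfl)
  have hcard : Fintype.card Ksub = q ^ 3 := by
    rw [show Fintype.card Ksub = (Stmt9Aux.Kf a b).card from Fintype.card_ofFinset _ _,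
      Stmt9Aux.card_Kf hA hD, hF]
  have hfin : Module.finrank F Ksub = 3 := by
    have h1 : Fintype.card Ksub = Fintype.card F ^ Module.finrank F Ksub :=
      Module.card_eq_pow_finrank
    rw [hcard, hF] at h1
    exact Nat.pow_right_injective hq2 h1.symm
  have hconv : ∀ w : ℕ, {c ∈ Ccode | hammingNorm c = w}
      = ↑((Stmt9Aux.Kf a b).filter fun c => hammingNorm c = w) := by
    intro w
    rw [hcode]
    ext c
    simp [Finset.mem_filter]
  have hq1 : 1 ≤ q := by omega
  have h45 := Stmt9Aux.card_W45 hA hD (by omega)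
  rw [hF] at h45
  refine ⟨?_, ?_, ?_, ?_, ?_, ?_, ?_⟩
  · rw [hspan]; exact hfin
  · rw [hconv 0, Set.ncard_coe_finset, Stmt9Aux.card_W0]
    norm_num
  · intro i h0 h3
    rw [hconv i, Set.ncard_coe_finset, Stmt9Aux.card_Wsmall hA hD h0 (by omega)]
    norm_num
  · rw [hconv 3, Set.ncard_coe_finset, Stmt9Aux.card_W3 hA hD, hF]
    push_cast [Nat.cast_sub hq1]
    ring
  · rw [hconv 4, Set.ncard_coe_finset]
    exact h45.1
  · rw [hconv 5, Set.ncard_coe_finset]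
    exact h45.2
  · have h3mem : 3 ∈ {w | ∃ c ∈ Ccode, c ≠ 0 ∧ hammingNorm c = w} := by
      have hpos : 0 < ((Stmt9Aux.Kf a b).filter fun c => hammingNorm c = 3).card := by
        rw [Stmt9Aux.card_W3 hA hD, hF]
        omega
      obtain ⟨c, hc⟩ := Finset.card_pos.mp hpos
      obtain ⟨hK, h3⟩ := Finset.mem_filter.mp hc
      refine ⟨c, by rw [hcode]; exact Finset.mem_coe.mpr hK, ?_, h3⟩
      intro h0
      rw [h0, hammingNorm_zero] at h3
      exact absurd h3 (by norm_num)
    have hlow : ∀ w ∈ {w | ∃ c ∈ Ccode, c ≠ 0 ∧ hammingNorm c = w}, 3 ≤ w := by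
      rintro w ⟨c, hcC, hc0, rfl⟩
      by_contra hlt
      push_neg at hlt
      have hcK : c ∈ Stmt9Aux.Kf a b := by
        rw [hcode] at hcC
        exact Finset.mem_coe.mp hcC
      exact hc0 (Stmt9Aux.small_wt hA hD hcK (by omega))
    exact le_antisymm (Nat.sInf_le h3mem) (hlow _ (Nat.sInf_mem ⟨3, h3mem⟩))
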